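/- Let T > 0, h > 0, N ≥ 0, d ∈ ℕ, ε₁, ε₂ ≥ 0, and let f : (0,T)×ℝᵈ → ℝᵈ satisfy |f_i(t,x)| ≤ 2N for all i, t, x, let L : (0,T)×ℝᵈ → ℝ be bounded with ‖L‖_∞ < ∞, and let g : ℝᵈ → ℝ be bounded with ‖g‖_∞ < ∞. Suppose w : [0,T]×ℝᵈ → ℝ is bounded, continuous, differentiable in t on (0,T), and satisfies |∂_t w + L + ∇^h w·f + N h Δ^h w| ≤ ε₁ on (0,T)×ℝᵈ and |w(T,x) − g(x)| ≤ ε₂ for all x ∈ ℝᵈ. Then |w(t,x)| ≤ ‖g‖_∞ + ε₂ + (T − t)·(‖L‖_∞ + ε₁) for all (t,x) ∈ [0,T]×ℝᵈ. -/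

import Mathlib

open Finset

/-- The central-difference transport term `∇^h φ(x) · f = ∑ i, (φ(x+h eᵢ) - φ(x-h eᵢ))/(2h) · fᵢ`. -/
noncomputable def gradDot (d : ℕ) (h : ℝ) (φ : (Fin d → ℝ) → ℝ) (x : Fin d → ℝ)
    (f : Fin d → ℝ) : ℝ :=
  ∑ i, ((φ (x + h • (Pi.single i 1 : Fin d → ℝ)) - φ (x - h • (Pi.single i 1 : Fin d → ℝ))) /
      (2 * h)) * f i

/-- The discrete Laplacian `Δ^h φ(x) = ∑ i, (φ(x+h eᵢ) - 2φ(x) + φ(x-h eᵢ))/h²`. -/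
noncomputable def discLap (d : ℕ) (h : ℝ) (φ : (Fin d → ℝ) → ℝ) (x : Fin d → ℝ) : ℝ :=
  ∑ i, (φ (x + h • (Pi.single i 1 : Fin d → ℝ)) - 2 * φ x +
      φ (x - h • (Pi.single i 1 : Fin d → ℝ))) / h ^ 2

lemma gradDot_neg (d : ℕ) (h : ℝ) (φ : (Fin d → ℝ) → ℝ) (x : Fin d → ℝ) (f : Fin d → ℝ) :
    gradDot d h (fun y => -φ y) x f = -gradDot d h φ x f := by
  unfold gradDot
  rw [← Finset.sum_neg_distrib]
  exact Finset.sum_congr rfl fun i _ => by ring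

lemma discLap_neg (d : ℕ) (h : ℝ) (φ : (Fin d → ℝ) → ℝ) (x : Fin d → ℝ) :
    discLap d h (fun y => -φ y) x = -discLap d h φ x := by
  unfold discLap
  rw [← Finset.sum_neg_distrib]
  exact Finset.sum_congr rfl fun i _ => by ring

lemma key15 (T h N : ℝ) (hT : 0 < T) (hh : 0 < h) (hN : 0 ≤ N) (d : ℕ)
    (ε₁ ε₂ θ : ℝ) (hθ : 0 < θ)
    (f : ℝ → (Fin d → ℝ) → Fin d → ℝ)
    (hf : ∀ t ∈ Set.Ioo (0 : ℝ) T, ∀ x : Fin d → ℝ, ∀ i, |f t x i| ≤ 2 * N)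
    (L : ℝ → (Fin d → ℝ) → ℝ) (g : (Fin d → ℝ) → ℝ) (CL Cg : ℝ)
    (hL : ∀ t ∈ Set.Ioo (0 : ℝ) T, ∀ x, |L t x| ≤ CL) (hg : ∀ x, |g x| ≤ Cg)
    (w wt : ℝ → (Fin d → ℝ) → ℝ)
    (hwbdd : ∃ C : ℝ, ∀ t ∈ Set.Icc (0 : ℝ) T, ∀ x, |w t x| ≤ C)
    (hwcont : ContinuousOn (fun q : ℝ × (Fin d → ℝ) => w q.1 q.2)
      (Set.Icc (0 : ℝ) T ×ˢ (Set.univ : Set (Fin d → ℝ))))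
    (hwderiv : ∀ t ∈ Set.Ioo (0 : ℝ) T, ∀ x, HasDerivAt (fun s => w s x) (wt t x) t)
    (hres : ∀ t ∈ Set.Ioo (0 : ℝ) T, ∀ x,
      |wt t x + L t x + gradDot d h (w t) x (f t x) + N * h * discLap d h (w t) x| ≤ ε₁)
    (hterm : ∀ x, |w T x - g x| ≤ ε₂) :
    ∀ t ∈ Set.Icc (0 : ℝ) T, ∀ x, w t x ≤ Cg + ε₂ + (T - t) * (CL + ε₁ + θ) := by
  by_contra hcon
  push_neg at hcon
  obtain ⟨ts, hts, xs, hxs⟩ := hcon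
  obtain ⟨C, hC⟩ := hwbdd
  have hCL : 0 ≤ CL := le_trans (abs_nonneg _) (hL (T/2) ⟨by linarith, by linarith⟩ 0)
  have hCg : 0 ≤ Cg := le_trans (abs_nonneg _) (hg 0)
  set K : ℝ := CL + ε₁ + θ with hK_def
  have hε₁ : 0 ≤ ε₁ := le_trans (abs_nonneg _) (hres (T/2) ⟨by linarith, by linarith⟩ 0)
  have hε₂ : 0 ≤ ε₂ := le_trans (abs_nonneg _) (hterm 0)
  have hK : 0 < K := by positivity
  set B : ℝ → ℝ := fun t => Cg + ε₂ + (T - t) * K with hB_def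
  set v : ℝ → (Fin d → ℝ) → ℝ := fun t x => w t x - B t with hv_def
  set A : Set ℝ := {r : ℝ | ∃ t ∈ Set.Icc (0 : ℝ) T, ∃ x, r = v t x} with hA_def
  have hAne : A.Nonempty := ⟨v ts xs, ts, hts, xs, rfl⟩
  have hAbdd : BddAbove A := by
    refine ⟨C, ?_⟩
    rintro r ⟨t, ht, x, rfl⟩
    have h1 : w t x ≤ C := le_trans (le_abs_self _) (hC t ht x)
    have h2 : 0 ≤ B t := by
      have : 0 ≤ (T - t) * K := mul_nonneg (by linarith [ht.2]) hK.le
      simp only [hB_def]; linarith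
    simp only [hv_def]; linarith
  set S : ℝ := sSup A with hS_def
  have hle_S : ∀ t ∈ Set.Icc (0 : ℝ) T, ∀ x, v t x ≤ S :=
    fun t ht x => le_csSup hAbdd ⟨t, ht, x, rfl⟩
  have hSpos : 0 < S := lt_of_lt_of_le (by simp only [hv_def, hB_def]; linarith) (hle_S ts hts xs)
  set M : ℝ := 2 * N * (d : ℝ) with hM_def
  have hM : 0 ≤ M := by positivity
  set η : ℝ := min (S / 2) (θ * h / (M + 1)) with hη_def
  have hηpos : 0 < η := lt_min (by linarith) (by positivity)
  -- near-sup point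
  obtain ⟨r, ⟨t₀, ht₀, x₀, rfl⟩, hr⟩ := exists_lt_of_lt_csSup hAne (show S - η < S by linarith)
  -- terminal bound: v T x ≤ 0
  have hvT : ∀ x, v T x ≤ 0 := by
    intro x
    have h1 := (abs_le.mp (hterm x)).2
    have h2 := (abs_le.mp (hg x)).2
    simp only [hv_def, hB_def]
    have : (T - T) * K = 0 := by ring
    linarith [this]
  have ht₀T : t₀ < T := by
    rcases lt_or_eq_of_le ht₀.2 with h' | h'
    · exact h'
    · exfalso; have := hvT x₀; rw [h'] at hr
      have hη2 : η ≤ S / 2 := min_le_left _ _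
      linarith
  -- u : time slice at x₀
  set u : ℝ → ℝ := fun t => v t x₀ with hu_def
  have hu_cont : ContinuousOn u (Set.Icc 0 T) := by
    have h1 : ContinuousOn (fun t : ℝ => w t x₀) (Set.Icc 0 T) := by
      have := hwcont.comp (f := fun t : ℝ => ((t, x₀) : ℝ × (Fin d → ℝ)))
        (continuous_id.prodMk continuous_const).continuousOn
        (fun t ht => ⟨ht, Set.mem_univ _⟩)
      exact this
    have h2 : ContinuousOn B (Set.Icc 0 T) := by
      refine Continuous.continuousOn ?_
      rw [hB_def]
      exact continuous_const.add ((continuous_const.sub continuous_id).mul continuous_const)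
    exact h1.sub h2
  -- find t₀' ∈ Ioo t₀ T with u t₀' > S - η
  have hclo : t₀ ∈ closure (Set.Ioo t₀ T) := by
    rw [closure_Ioo (ne_of_lt ht₀T)]; exact ⟨le_refl _, ht₀T.le⟩
  have hnb : Filter.NeBot (nhdsWithin t₀ (Set.Ioo t₀ T)) :=
    mem_closure_iff_nhdsWithin_neBot.mp hclo
  have hev : ∀ᶠ t in nhdsWithin t₀ (Set.Ioo t₀ T), S - η < u t := by
    have h1 : Filter.Tendsto u (nhdsWithin t₀ (Set.Icc 0 T)) (nhds (u t₀)) :=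
      hu_cont t₀ ht₀
    have h2 : ∀ᶠ t in nhdsWithin t₀ (Set.Icc 0 T), S - η < u t :=
      h1 (Ioi_mem_nhds hr)
    exact h2.filter_mono (nhdsWithin_mono _ (Set.Ioo_subset_Icc_self.trans (Set.Icc_subset_Icc ht₀.1 le_rfl)))
  obtain ⟨t₀', ht₀'gt, ht₀'mem⟩ := (hev.and (eventually_mem_nhdsWithin)).exists
  have ht₀'Ioo : t₀' ∈ Set.Ioo (0 : ℝ) T := ⟨lt_of_le_of_lt ht₀.1 ht₀'mem.1, ht₀'mem.2⟩
  -- maximize u on [t₀', T]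
  have hsub : Set.Icc t₀' T ⊆ Set.Icc (0 : ℝ) T :=
    Set.Icc_subset_Icc ht₀'Ioo.1.le le_rfl
  obtain ⟨t₁, ht₁mem, ht₁max⟩ := isCompact_Icc.exists_isMaxOn
    (Set.nonempty_Icc.mpr ht₀'Ioo.2.le) (hu_cont.mono hsub)
  have hut₁ : S - η < u t₁ := lt_of_lt_of_le ht₀'gt
    (ht₁max (Set.mem_Icc.mpr ⟨le_rfl, ht₀'Ioo.2.le⟩))
  have ht₁T : t₁ < T := by
    rcases lt_or_eq_of_le ht₁mem.2 with h' | h'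
    · exact h'
    · exfalso; have := hvT x₀
      have hη2 : η ≤ S / 2 := min_le_left _ _
      rw [h'] at hut₁; exact absurd hut₁ (by simp only [hu_def]; linarith)
  have ht₁Ioo : t₁ ∈ Set.Ioo (0 : ℝ) T := ⟨lt_of_lt_of_le ht₀'Ioo.1 ht₁mem.1, ht₁T⟩
  -- derivative of u at t₁
  have hBderiv : HasDerivAt B (-K) t₁ := by
    have : HasDerivAt (fun t : ℝ => Cg + ε₂ + (T - t) * K) ((-1) * K) t₁ := by
      exact (((hasDerivAt_id t₁).const_sub T).mul_const K).const_add (Cg + ε₂)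
    rw [show (-1 : ℝ) * K = -K by ring] at this
    exact this
  have huderiv : HasDerivAt u (wt t₁ x₀ + K) t₁ := by
    have := (hwderiv t₁ ht₁Ioo x₀).sub hBderiv
    rw [sub_neg_eq_add] at this
    exact this
  -- derivative nonpositive at max
  have hd_nonpos : wt t₁ x₀ + K ≤ 0 := by
    have hslope : Filter.Tendsto (slope u t₁) (nhdsWithin t₁ {t₁}ᶜ) (nhds (wt t₁ x₀ + K)) :=
      hasDerivAt_iff_tendsto_slope.mp huderiv
    have hslope' : Filter.Tendsto (slope u t₁) (nhdsWithin t₁ (Set.Ioi t₁))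
        (nhds (wt t₁ x₀ + K)) :=
      hslope.mono_left (nhdsWithin_mono _ (fun t ht => ne_of_gt ht))
    refine le_of_tendsto hslope' ?_
    have hIoo : Set.Ioo t₁ T ∈ nhdsWithin t₁ (Set.Ioi t₁) := by
      rw [mem_nhdsWithin]
      exact ⟨Set.Iio T, isOpen_Iio, ht₁T, fun t ht => ⟨ht.2, ht.1⟩⟩
    filter_upwards [hIoo] with t ht
    have hle : u t ≤ u t₁ := ht₁max (Set.mem_Icc.mpr ⟨le_trans ht₁mem.1 ht.1.le, ht.2.le⟩)
    rw [slope_def_field]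
    exact div_nonpos_of_nonpos_of_nonneg (by linarith) (by linarith [ht.1])
  -- the PDE inequality at (t₁, x₀)
  have hres₁ := (abs_le.mp (hres t₁ ht₁Ioo x₀)).1
  have hL₁ := (abs_le.mp (hL t₁ ht₁Ioo x₀)).2
  -- key sum estimate
  have hwle : ∀ y, w t₁ y ≤ S + B t₁ := by
    intro y
    have := hle_S t₁ ⟨ht₁Ioo.1.le, ht₁Ioo.2.le⟩ y
    simp only [hv_def] at this; linarith
  have hwx₀ : S - η + B t₁ < w t₁ x₀ := by
    simp only [hu_def, hv_def] at hut₁; linarith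
  have hsum : gradDot d h (w t₁) x₀ (f t₁ x₀) + N * h * discLap d h (w t₁) x₀
      ≤ M / h * η := by
    unfold gradDot discLap
    rw [Finset.mul_sum, ← Finset.sum_add_distrib]
    have step : ∀ i ∈ Finset.univ (α := Fin d),
        (w t₁ (x₀ + h • (Pi.single i 1 : Fin d → ℝ)) -
          w t₁ (x₀ - h • (Pi.single i 1 : Fin d → ℝ))) / (2 * h) * f t₁ x₀ i +
        N * h * ((w t₁ (x₀ + h • (Pi.single i 1 : Fin d → ℝ)) - 2 * w t₁ x₀ +
          w t₁ (x₀ - h • (Pi.single i 1 : Fin d → ℝ))) / h ^ 2)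
        ≤ 2 * N / h * η := by
      intro i _
      set p := w t₁ (x₀ + h • (Pi.single i 1 : Fin d → ℝ)) with hp
      set m := w t₁ (x₀ - h • (Pi.single i 1 : Fin d → ℝ)) with hm
      set z := w t₁ x₀ with hz
      set fi := f t₁ x₀ i with hfi
      have hfib := abs_le.mp (hf t₁ ht₁Ioo x₀ i)
      have hpz : p - z ≤ η := by
        have := hwle (x₀ + h • (Pi.single i 1 : Fin d → ℝ)); linarith [hwx₀]
      have hmz : m - z ≤ η := by
        have := hwle (x₀ - h • (Pi.single i 1 : Fin d → ℝ)); linarith [hwx₀]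
      have heq : (p - m) / (2 * h) * fi + N * h * ((p - 2 * z + m) / h ^ 2)
          = (fi + 2 * N) / (2 * h) * (p - z) + (2 * N - fi) / (2 * h) * (m - z) := by
        field_simp
        ring
      rw [heq]
      have hc1 : 0 ≤ (fi + 2 * N) / (2 * h) := div_nonneg (by linarith [hfib.1]) (by linarith)
      have hc2 : 0 ≤ (2 * N - fi) / (2 * h) := div_nonneg (by linarith [hfib.2]) (by linarith)
      have h1 : (fi + 2 * N) / (2 * h) * (p - z) ≤ (fi + 2 * N) / (2 * h) * η :=
        mul_le_mul_of_nonneg_left hpz hc1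
      have h2 : (2 * N - fi) / (2 * h) * (m - z) ≤ (2 * N - fi) / (2 * h) * η :=
        mul_le_mul_of_nonneg_left hmz hc2
      have h3 : (fi + 2 * N) / (2 * h) * η + (2 * N - fi) / (2 * h) * η = 2 * N / h * η := by
        field_simp
        ring
      linarith
    calc ∑ i : Fin d, _ ≤ ∑ _i : Fin d, 2 * N / h * η := Finset.sum_le_sum step
      _ = (d : ℝ) * (2 * N / h * η) := by
          rw [Finset.sum_const, Finset.card_univ, Fintype.card_fin, nsmul_eq_mul]
      _ = M / h * η := by rw [hM_def]; ring
  -- combine: wt t₁ x₀ ≥ -CL - ε₁ - M/h*η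
  have hlow : -CL - ε₁ - M / h * η ≤ wt t₁ x₀ := by linarith
  -- contradiction
  have hηle : η ≤ θ * h / (M + 1) := min_le_right _ _
  have h1 : M / h * η ≤ M / h * (θ * h / (M + 1)) :=
    mul_le_mul_of_nonneg_left hηle (div_nonneg hM hh.le)
  have h2 : M / h * (θ * h / (M + 1)) = M * θ / (M + 1) := by
    field_simp
  have h3 : M * θ / (M + 1) < θ := by
    rw [div_lt_iff₀ (by linarith)]; nlinarith
  simp only [hK_def] at hd_nonpos
  linarith

/-- uniform boundedness: if `|fᵢ| ≤ 2N`, `‖L‖_∞ ≤ CL`,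
`‖g‖_∞ ≤ Cg`, and the bounded continuous function `w`, differentiable in `t`,
has PDE residual at most `ε₁` on `(0,T) × ℝᵈ` and terminal error at most `ε₂`,
then `|w(t,x)| ≤ Cg + ε₂ + (T-t)·(CL + ε₁)` on `[0,T] × ℝᵈ`.  (Quantified over
all upper bounds `CL, Cg`, this is equivalent to the statement with the exact
sup-norms `‖L‖_∞, ‖g‖_∞`.) -/
theorem statement15 (T h N : ℝ) (hT : 0 < T) (hh : 0 < h) (hN : 0 ≤ N) (d : ℕ)
    (ε₁ ε₂ : ℝ) (hε₁ : 0 ≤ ε₁) (hε₂ : 0 ≤ ε₂)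
    (f : ℝ → (Fin d → ℝ) → Fin d → ℝ)
    (hf : ∀ t ∈ Set.Ioo (0 : ℝ) T, ∀ x : Fin d → ℝ, ∀ i, |f t x i| ≤ 2 * N)
    (L : ℝ → (Fin d → ℝ) → ℝ) (g : (Fin d → ℝ) → ℝ) (CL Cg : ℝ)
    (hL : ∀ t ∈ Set.Ioo (0 : ℝ) T, ∀ x, |L t x| ≤ CL) (hg : ∀ x, |g x| ≤ Cg)
    (w wt : ℝ → (Fin d → ℝ) → ℝ)
    (hwbdd : ∃ C : ℝ, ∀ t ∈ Set.Icc (0 : ℝ) T, ∀ x, |w t x| ≤ C)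
    (hwcont : ContinuousOn (fun q : ℝ × (Fin d → ℝ) => w q.1 q.2)
      (Set.Icc (0 : ℝ) T ×ˢ (Set.univ : Set (Fin d → ℝ))))
    (hwderiv : ∀ t ∈ Set.Ioo (0 : ℝ) T, ∀ x, HasDerivAt (fun s => w s x) (wt t x) t)
    (hres : ∀ t ∈ Set.Ioo (0 : ℝ) T, ∀ x,
      |wt t x + L t x + gradDot d h (w t) x (f t x) + N * h * discLap d h (w t) x| ≤ ε₁)
    (hterm : ∀ x, |w T x - g x| ≤ ε₂) :
    ∀ t ∈ Set.Icc (0 : ℝ) T, ∀ x, |w t x| ≤ Cg + ε₂ + (T - t) * (CL + ε₁) := by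
  obtain ⟨C, hC⟩ := hwbdd
  -- negated data
  have hres' : ∀ t ∈ Set.Ioo (0 : ℝ) T, ∀ x,
      |(fun t x => -wt t x) t x + (fun t x => -L t x) t x +
        gradDot d h ((fun t x => -w t x) t) x (f t x) +
        N * h * discLap d h ((fun t x => -w t x) t) x| ≤ ε₁ := by
    intro t ht x
    show |(-wt t x) + (-L t x) + gradDot d h (fun y => -(w t y)) x (f t x) +
        N * h * discLap d h (fun y => -(w t y)) x| ≤ ε₁
    rw [gradDot_neg, discLap_neg]
    have heq : (-wt t x) + (-L t x) + -gradDot d h (w t) x (f t x) +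
        N * h * -discLap d h (w t) x
        = -(wt t x + L t x + gradDot d h (w t) x (f t x) +
            N * h * discLap d h (w t) x) := by ring
    rw [heq, abs_neg]
    exact hres t ht x
  intro t ht x
  have habs : ∀ a : ℝ, (∀ θ : ℝ, 0 < θ → a ≤ Cg + ε₂ + (T - t) * (CL + ε₁ + θ)) →
      a ≤ Cg + ε₂ + (T - t) * (CL + ε₁) := by
    intro a ha
    by_contra hcon
    push_neg at hcon
    set δ := a - (Cg + ε₂ + (T - t) * (CL + ε₁)) with hδ
    have hδpos : 0 < δ := by linarith
    have hTt : 0 ≤ T - t := by linarith [ht.2]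
    have hTt' : T - t ≤ T := by linarith [ht.1]
    have h1 := ha (δ / (2 * (T + 1))) (by positivity)
    have hexp : (T - t) * (CL + ε₁ + δ / (2 * (T + 1)))
        = (T - t) * (CL + ε₁) + (T - t) * (δ / (2 * (T + 1))) := by ring
    have h2 : (T - t) * (δ / (2 * (T + 1))) ≤ T * (δ / (2 * (T + 1))) :=
      mul_le_mul_of_nonneg_right hTt' (by positivity)
    have h3 : T * (δ / (2 * (T + 1))) < δ := by
      rw [mul_div_assoc', div_lt_iff₀ (by linarith)]
      nlinarith
    rw [hexp] at h1
    linarith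
  have hupper : w t x ≤ Cg + ε₂ + (T - t) * (CL + ε₁) := by
    refine habs _ (fun θ hθ => ?_)
    exact key15 T h N hT hh hN d ε₁ ε₂ θ hθ f hf L g CL Cg hL hg w wt ⟨C, hC⟩
      hwcont hwderiv hres hterm t ht x
  have hlower : -(w t x) ≤ Cg + ε₂ + (T - t) * (CL + ε₁) := by
    refine habs _ (fun θ hθ => ?_)
    exact key15 T h N hT hh hN d ε₁ ε₂ θ hθ f hf (fun t x => -L t x) (fun x => -g x) CL Cg
      (fun t ht x => by show |-(L t x)| ≤ CL; rw [abs_neg]; exact hL t ht x)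
      (fun x => by show |-(g x)| ≤ Cg; rw [abs_neg]; exact hg x)
      (fun t x => -w t x) (fun t x => -wt t x)
      ⟨C, fun t ht x => by show |-(w t x)| ≤ C; rw [abs_neg]; exact hC t ht x⟩
      hwcont.neg
      (fun t ht x => (hwderiv t ht x).neg)
      hres'
      (fun x => by
        show |-(w T x) - -(g x)| ≤ ε₂
        rw [show -(w T x) - -(g x) = -(w T x - g x) by ring, abs_neg]; exact hterm x)
      t ht x
  exact abs_le.mpr ⟨by linarith, hupper⟩
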